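/- Let $v_\pm>0$, $\theta_\pm>0$ with $(v_+,\theta_+)\neq(v_-,\theta_-)$, and suppose the pressure matching condition $R\theta_- /v_- = R\theta_+/v_+$ holds. Then the three vectors $r_1^- = (-1, \lambda_1^-, \frac{\gamma-1}{R}p_-)^t$, $m_+ - m_- = (v_+-v_-, 0, \theta_+-\theta_-)^t$, and $r_3^+ = (-1, \lambda_3^+, \frac{\gamma-1}{R}p_+)^t$ are linearly independent in $\mathbb{R}^3$, where $\lambda_1^- = -\sqrt{\gamma p_- /v_-}$, $\lambda_3^+ = \sqrt{\gamma p_+/v_+}$, $p_\pm = R\theta_\pm/v_\pm$. Consequently every vector in $\mathbb{R}^3$ can be uniquely written as $\bar\theta_1 r_1^- + \bar\theta_2(m_+-m_-) + \bar\theta_3 r_3^+$ for real constants $\bar\theta_1,\bar\theta_2,\bar\theta_3$. -/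

import Mathlib

open Matrix Real

/-- Linear independence of `r₁⁻`, `m₊ - m₋`, `r₃⁺` and unique decomposition of
any vector of `ℝ³` along them. -/
theorem stmt2 (R γ vm θm vp θp : ℝ) (hR : 0 < R) (hγ : 1 < γ)
    (hvm : 0 < vm) (hθm : 0 < θm) (hvp : 0 < vp) (hθp : 0 < θp)
    (hne : (vp, θp) ≠ (vm, θm))
    (hpress : R * θm / vm = R * θp / vp)
    (pm pp : ℝ) (hpm : pm = R * θm / vm) (hpp : pp = R * θp / vp)
    (r1 r3 d : Fin 3 → ℝ)
    (hr1 : r1 = ![-1, -Real.sqrt (γ * pm / vm), (γ - 1) / R * pm])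
    (hr3 : r3 = ![-1, Real.sqrt (γ * pp / vp), (γ - 1) / R * pp])
    (hd : d = ![vp - vm, 0, θp - θm]) :
    LinearIndependent ℝ ![r1, d, r3] ∧
    ∀ w : Fin 3 → ℝ, ∃! c : ℝ × ℝ × ℝ, w = c.1 • r1 + c.2.1 • d + c.2.2 • r3 := by
  have hpe : pp = pm := by rw [hpm, hpp, hpress]
  rw [hpe] at hr3
  have hpm0 : 0 < pm := by rw [hpm]; positivity
  have ha : 0 ≤ Real.sqrt (γ * pm / vm) := Real.sqrt_nonneg _
  have hb : 0 < Real.sqrt (γ * pm / vp) := by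
    apply Real.sqrt_pos.2; positivity
  -- vp ≠ vm
  have hvne : vp ≠ vm := by
    intro h
    apply hne
    have h2 : R * θm / vm = R * θp / vm := by rw [hpress, h]
    have h3 : θm = θp := by
      rw [div_left_inj' hvm.ne'] at h2
      exact mul_left_cancel₀ hR.ne' h2
    rw [h, h3]
  -- relation between θp - θm and vp - vm
  have hθrel : θp - θm = pm / R * (vp - vm) := by
    have h1 : R * θm = pm * vm := by rw [hpm]; field_simp
    have h2 : R * θp = pm * vp := by rw [← hpe, hpp]; field_simp
    have h3 : R * (θp - θm) = pm * (vp - vm) := by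
      rw [mul_sub, mul_sub, h1, h2]
    field_simp
    linarith [h3]
  -- the matrix
  set M : Matrix (Fin 3) (Fin 3) ℝ := Matrix.of ![r1, d, r3] with hM
  have e00 : M 0 0 = -1 := by rw [hM]; simp [hr1]
  have e01 : M 0 1 = -Real.sqrt (γ * pm / vm) := by rw [hM]; simp [hr1]
  have e02 : M 0 2 = (γ - 1) / R * pm := by rw [hM]; simp [hr1]
  have e10 : M 1 0 = vp - vm := by rw [hM]; simp [hd]
  have e11 : M 1 1 = 0 := by rw [hM]; simp [hd]
  have e12 : M 1 2 = θp - θm := by rw [hM]; simp [hd]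
  have e20 : M 2 0 = -1 := by rw [hM]; simp [hr3]
  have e21 : M 2 1 = Real.sqrt (γ * pm / vp) := by rw [hM]; simp [hr3]
  have e22 : M 2 2 = (γ - 1) / R * pm := by rw [hM]; simp [hr3]
  have hdet : M.det ≠ 0 := by
    rw [Matrix.det_fin_three, e00, e01, e02, e10, e11, e12, e20, e21, e22, hθrel]
    intro hcontr
    set a := Real.sqrt (γ * pm / vm)
    set b := Real.sqrt (γ * pm / vp)
    have hprod : (a + b) * (vp - vm) * (γ * pm / R) = 0 := by
      linear_combination hcontr
    rcases mul_eq_zero.1 hprod with h' | h'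
    · rcases mul_eq_zero.1 h' with h'' | h''
      · linarith
      · exact hvne (by linarith)
    · have : (0:ℝ) < γ * pm / R := by positivity
      linarith
  have hunit : IsUnit M := (Matrix.isUnit_iff_isUnit_det M).2 (isUnit_iff_ne_zero.2 hdet)
  have hLI : LinearIndependent ℝ ![r1, d, r3] :=
    Matrix.linearIndependent_rows_iff_isUnit.2 hunit
  refine ⟨hLI, fun w => ?_⟩
  have hcomb : ∀ c1 c2 c3 : ℝ,
      c1 • r1 + c2 • d + c3 • r3 = M.vecMul ![c1, c2, c3] := by
    intro c1 c2 c3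
    funext j
    simp [Matrix.vecMul, dotProduct, Fin.sum_univ_three, hM, mul_comm, add_assoc]
  have hsurj := Matrix.vecMul_surjective_iff_isUnit.2 hunit
  have hinj := Matrix.vecMul_injective_iff_isUnit.2 hunit
  obtain ⟨x, hx⟩ := hsurj w
  refine ⟨(x 0, x 1, x 2), ?_, ?_⟩
  · show w = _
    dsimp only
    rw [hcomb]
    have hxe : ![x 0, x 1, x 2] = x := by
      funext i; fin_cases i <;> rfl
    rw [hxe]
    exact hx.symm
  · rintro ⟨c1, c2, c3⟩ hc
    dsimp only at hc
    rw [hcomb] at hc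
    have hxe : ![c1, c2, c3] = x := hinj (hc.symm.trans hx.symm)
    have h0 := congr_fun hxe 0
    have h1 := congr_fun hxe 1
    have h2 := congr_fun hxe 2
    simp only [Matrix.cons_val_zero, Matrix.cons_val_one, Matrix.head_cons,
      Matrix.cons_val_two, Matrix.tail_cons] at h0 h1 h2
    simp [Prod.ext_iff, h0, h1, h2]
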